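/- Let t ↦ (x_t, y_t) be the unique solution of the ODE ż = B(z) on its maximal forward interval [0, 𝒯) with (x∘, y∘) ∈ S, suppose 𝒯 < ∞, and let x_- = min{x∘, x_∞} and ť = sup{ t < 𝒯 : x_t ≥ x_- /2 }. If (x_{t'}, y_{t'}) ∈ U = (0, x_- /2) × [0, ∞) for some t' ∈ (ť, 𝒯), then x_t ≥ x_{t'} for all t ∈ (t', 𝒯). -/

import Mathlib

open Real Set Filter Topology

/-- The optimal-velocity function `V(x) = tanh(x-2) - tanh(-2)`. -/
noncomputable def V (x : ℝ) : ℝ := Real.tanh (x - 2) - Real.tanh (-2)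

/-- Inverse hyperbolic tangent. -/
noncomputable def artanh (v : ℝ) : ℝ := (1 / 2) * Real.log ((1 + v) / (1 - v))

/-- The equilibrium following distance `x_∞ = d (2 + artanh(v∘ + tanh(-2)))`. -/
noncomputable def xInf (d v₀ : ℝ) : ℝ := d * (2 + _root_.artanh (v₀ + Real.tanh (-2)))

/-- `IsSol α β d v₀ x y T` says that `t ↦ (x t, y t)` solves the ODE `ż = B(z)` on the
forward time interval `[0, T)`, staying in the state space `S = (0,∞) × ℝ`. -/
def IsSol (α β d v₀ : ℝ) (x y : ℝ → ℝ) (T : EReal) : Prop :=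
  ∀ t : ℝ, 0 ≤ t → (t : EReal) < T →
    0 < x t ∧ HasDerivAt x (y t) t ∧
      HasDerivAt y (-α * (V (x t / d) - v₀ + y t) - β * y t / (x t) ^ 2) t

/-- `[0, T)` is the maximal forward interval of definition. -/
def IsMaximal (α β d v₀ : ℝ) (x y : ℝ → ℝ) (T : EReal) : Prop :=
  ∀ (T' : EReal) (x' y' : ℝ → ℝ), T < T' → IsSol α β d v₀ x' y' T' →
    x' 0 = x 0 → y' 0 = y 0 → False

lemma tanh_eq' (x : ℝ) : Real.tanh x = (Real.exp (2*x) - 1) / (Real.exp (2*x) + 1) := by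
  rw [Real.tanh_eq_sinh_div_cosh, Real.sinh_eq, Real.cosh_eq]
  rw [show (2:ℝ)*x = x + x by ring, Real.exp_add]
  have h3 : Real.exp x * Real.exp (-x) = 1 := by rw [← Real.exp_add]; simp
  field_simp
  nlinarith [Real.exp_pos x]

lemma tanh_strictMono : StrictMono Real.tanh := by
  intro a b hab
  rw [tanh_eq', tanh_eq']
  have ha := Real.exp_pos (2*a)
  have hb := Real.exp_pos (2*b)
  have h : Real.exp (2*a) < Real.exp (2*b) := Real.exp_lt_exp.2 (by linarith)
  rw [div_lt_div_iff₀ (by linarith) (by linarith)]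
  nlinarith

lemma tanh_artanh {v : ℝ} (h1 : -1 < v) (h2 : v < 1) : Real.tanh (_root_.artanh v) = v := by
  have hpos : 0 < (1 + v) / (1 - v) := by apply div_pos <;> linarith
  have hexp : Real.exp (2 * _root_.artanh v) = (1 + v) / (1 - v) := by
    rw [_root_.artanh, show 2 * ((1/2) * Real.log ((1+v)/(1-v))) = Real.log ((1+v)/(1-v)) by ring,
      Real.exp_log hpos]
  have h : (1 - v) ≠ 0 := by linarith
  rw [tanh_eq', hexp]
  field_simp
  ring

lemma tanh_two_mem : Real.tanh 2 ∈ Set.Ioo (0:ℝ) 1 := by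
  rw [tanh_eq']
  constructor
  · apply div_pos
    · linarith [Real.add_one_le_exp (2*2)]
    · positivity
  · rw [div_lt_one (by positivity)]; linarith

lemma hv_mem {v₀ : ℝ} (hv₀ : v₀ ∈ Set.Ioo 0 (1 + Real.tanh 2)) :
    v₀ + Real.tanh (-2) ∈ Set.Ioo (-1:ℝ) 1 := by
  have := tanh_two_mem
  rw [Real.tanh_neg]
  obtain ⟨h1, h2⟩ := hv₀
  exact ⟨by simp at this ⊢; linarith [this.2], by linarith⟩

lemma xInf_pos {d v₀ : ℝ} (hd : 0 < d) (hv₀ : v₀ ∈ Set.Ioo 0 (1 + Real.tanh 2)) :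
    0 < xInf d v₀ := by
  obtain ⟨h1, h2⟩ := hv_mem hv₀
  have htwo := tanh_two_mem
  apply mul_pos hd
  have key : -2 < _root_.artanh (v₀ + Real.tanh (-2)) := by
    by_contra h
    push_neg at h
    have := tanh_strictMono.monotone h
    rw [tanh_artanh h1 h2] at this
    linarith [hv₀.1]
  linarith

lemma V_lt {d v₀ ξ : ℝ} (hd : 0 < d) (hv₀ : v₀ ∈ Set.Ioo 0 (1 + Real.tanh 2))
    (hξ : ξ < xInf d v₀) : V (ξ / d) < v₀ := by
  obtain ⟨h1, h2⟩ := hv_mem hv₀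
  have hlt : ξ / d - 2 < _root_.artanh (v₀ + Real.tanh (-2)) := by
    rw [xInf] at hξ
    rw [div_sub' hd.ne', div_lt_iff₀ hd]
    nlinarith
  have := tanh_strictMono hlt
  rw [tanh_artanh h1 h2] at this
  rw [V]
  linarith

/-- with `𝒯 < ∞`, `x₋ = min{x∘, x_∞}` and
`ť = sup{ t < 𝒯 : x_t ≥ x₋ / 2 }`, if the solution is in `U = (0, x₋ / 2) × [0,∞)` at some
time `t' ∈ (ť, 𝒯)`, then `x_t ≥ x_{t'}` for all `t ∈ (t', 𝒯)`. -/
theorem upper_region_drift_right (α β d v₀ : ℝ)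
    (hα : 0 < α) (hβ : 0 < β) (hd : 0 < d)
    (hv₀ : v₀ ∈ Set.Ioo 0 (1 + Real.tanh 2))
    (x y : ℝ → ℝ) (T : ℝ) (hT : 0 < T)
    (x₀ y₀ : ℝ) (hx₀ : 0 < x₀) (hinit : x 0 = x₀ ∧ y 0 = y₀)
    (hsol : IsSol α β d v₀ x y (T : EReal))
    (hmax : IsMaximal α β d v₀ x y (T : EReal))
    (xm : ℝ) (hxm : xm = min x₀ (xInf d v₀))
    (tc : ℝ) (htc : tc = sSup {t : ℝ | 0 ≤ t ∧ t < T ∧ xm / 2 ≤ x t}) :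
    ∀ t' : ℝ, tc < t' → t' < T →
      (0 < x t' ∧ x t' < xm / 2 ∧ 0 ≤ y t') →
      ∀ t : ℝ, t' < t → t < T → x t' ≤ x t := by
  intro t' ht'c ht'T hU t htt' htT
  obtain ⟨hxpos', hxlt', hy0'⟩ := hU
  obtain ⟨hx0, hy0init⟩ := hinit
  have hxInf := xInf_pos hd hv₀
  have hxm0 : 0 < xm := by rw [hxm]; exact lt_min hx₀ hxInf
  have hxmInf : xm ≤ xInf d v₀ := hxm ▸ min_le_right _ _
  -- facts from IsSol with real time
  have hsolR : ∀ s : ℝ, 0 ≤ s → s < T →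
      0 < x s ∧ HasDerivAt x (y s) s ∧
        HasDerivAt y (-α * (V (x s / d) - v₀ + y s) - β * y s / (x s) ^ 2) s := by
    intro s h1 h2
    exact hsol s h1 (by exact_mod_cast h2)
  -- the sup set
  set A : Set ℝ := {s : ℝ | 0 ≤ s ∧ s < T ∧ xm / 2 ≤ x s} with hA
  have hA0 : (0:ℝ) ∈ A := by
    refine ⟨le_refl 0, hT, ?_⟩
    rw [hx0]
    have : xm ≤ x₀ := hxm ▸ min_le_left _ _
    linarith
  have hAbdd : BddAbove A := ⟨T, fun s hs => hs.2.1.le⟩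
  have htc0 : 0 ≤ tc := htc ▸ le_csSup hAbdd hA0
  -- past tc, x stays below xm/2
  have hlt : ∀ s : ℝ, tc < s → s < T → x s < xm / 2 := by
    intro s hs1 hs2
    by_contra h
    push_neg at h
    have hmem : s ∈ A := ⟨le_trans htc0 hs1.le, hs2, h⟩
    have := le_csSup hAbdd hmem
    rw [← htc] at this
    linarith
  have ht'0 : 0 ≤ t' := le_trans htc0 ht'c.le
  -- Step B : y stays nonnegative on [t', T)
  have hy : ∀ s : ℝ, t' ≤ s → s < T → 0 ≤ y s := by
    intro s hs1 hs2
    by_contra hneg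
    push_neg at hneg
    set B : Set ℝ := {u : ℝ | u ∈ Set.Icc t' s ∧ y u < 0} with hB
    have hsB : s ∈ B := ⟨⟨hs1, le_refl s⟩, hneg⟩
    have hBne : B.Nonempty := ⟨s, hsB⟩
    have hBbdd : BddBelow B := ⟨t', fun u hu => hu.1.1⟩
    set s₀ := sInf B with hs₀
    have hs₀ge : t' ≤ s₀ := le_csInf hBne (fun u hu => hu.1.1)
    have hs₀le : s₀ ≤ s := csInf_le hBbdd hsB
    have hs₀T : s₀ < T := lt_of_le_of_lt hs₀le hs2
    have hs₀0 : 0 ≤ s₀ := le_trans ht'0 hs₀ge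
    obtain ⟨hxpos₀, hdx₀, hdy₀⟩ := hsolR s₀ hs₀0 hs₀T
    have hycont : ContinuousAt y s₀ := hdy₀.continuousAt
    -- y s₀ ≤ 0
    have hyle : y s₀ ≤ 0 := by
      by_contra hpos
      push_neg at hpos
      have hev : y ⁻¹' Set.Ioi 0 ∈ 𝓝 s₀ := hycont (Ioi_mem_nhds hpos)
      obtain ⟨δ, hδ, hball⟩ := Metric.mem_nhds_iff.1 hev
      obtain ⟨b, hbB, hb⟩ := exists_lt_of_csInf_lt hBne
        (show sInf B < s₀ + δ by rw [← hs₀]; linarith)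
      have hbge : s₀ ≤ b := csInf_le hBbdd hbB
      have : b ∈ Metric.ball s₀ δ := by
        rw [Metric.mem_ball, Real.dist_eq, abs_of_nonneg (by linarith)]
        linarith
      have := hball this
      exact absurd hbB.2 (by simp only [Set.mem_preimage, Set.mem_Ioi] at this; linarith)
    -- y s₀ ≥ 0
    have hyge : 0 ≤ y s₀ := by
      rcases eq_or_lt_of_le hs₀ge with heq | hlt'
      · rw [← heq]; exact hy0'
      · have hten : Filter.Tendsto y (𝓝[<] s₀) (𝓝 (y s₀)) :=
          hycont.mono_left nhdsWithin_le_nhds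
        refine ge_of_tendsto hten ?_
        filter_upwards [Ioo_mem_nhdsLT_of_mem ⟨hlt', le_refl s₀⟩] with u hu
        by_contra hyu
        push_neg at hyu
        have huB : u ∈ B := ⟨⟨hu.1.le, le_trans hu.2.le hs₀le⟩, hyu⟩
        have := csInf_le hBbdd huB
        rw [← hs₀] at this
        linarith [hu.2]
    have hy₀ : y s₀ = 0 := le_antisymm hyle hyge
    -- the derivative of y at s₀ is positive
    have hxs₀ : x s₀ < xInf d v₀ := by
      have := hlt s₀ (lt_of_lt_of_le ht'c hs₀ge) hs₀T
      linarith
    have hV : V (x s₀ / d) < v₀ := V_lt hd hv₀ hxs₀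
    have hLpos : 0 < -α * (V (x s₀ / d) - v₀ + y s₀) - β * y s₀ / (x s₀) ^ 2 := by
      rw [hy₀]
      have : -α * (V (x s₀ / d) - v₀ + 0) = α * (v₀ - V (x s₀ / d)) := by ring
      rw [this]
      have h1 : 0 < α * (v₀ - V (x s₀ / d)) := mul_pos hα (by linarith)
      simp only [mul_zero, zero_div]
      simpa using h1
    -- y is positive just to the right of s₀
    have hslope := hasDerivAt_iff_tendsto_slope.1 hdy₀
    have hev2 : ∀ᶠ u in 𝓝[≠] s₀, 0 < slope y s₀ u := hslope (Ioi_mem_nhds hLpos)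
    have hev3 : ∀ᶠ u in 𝓝[>] s₀, 0 < y u := by
      have hmono : 𝓝[>] s₀ ≤ 𝓝[≠] s₀ :=
        nhdsWithin_mono _ (fun u hu => ne_of_gt hu)
      filter_upwards [hmono hev2, self_mem_nhdsWithin] with u hu hu'
      rw [Set.mem_Ioi] at hu'
      rw [slope_def_field] at hu
      rcases div_pos_iff.1 hu with ⟨h5, _⟩ | ⟨_, h6⟩
      · linarith [hy₀]
      · linarith [sub_pos.2 hu']
    rw [eventually_nhdsWithin_iff] at hev3
    obtain ⟨δ, hδ, hball⟩ := Metric.mem_nhds_iff.1 hev3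
    obtain ⟨b, hbB, hb⟩ := exists_lt_of_csInf_lt hBne
      (show sInf B < s₀ + δ by rw [← hs₀]; linarith)
    have hbge : s₀ ≤ b := csInf_le hBbdd hbB
    have hbne : s₀ ≠ b := by
      intro h
      rw [← h] at hbB
      exact absurd hbB.2 (by rw [hy₀]; simp)
    have hbmem : b ∈ Metric.ball s₀ δ := by
      rw [Metric.mem_ball, Real.dist_eq, abs_of_nonneg (by linarith)]
      linarith
    have := hball hbmem (lt_of_le_of_ne hbge hbne)
    linarith [hbB.2]
  -- Step C : monotonicity of x on [t', t]
  have hmono : MonotoneOn x (Set.Icc t' t) := by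
    apply monotoneOn_of_deriv_nonneg (convex_Icc t' t)
    · intro u hu
      have h1 : 0 ≤ u := le_trans ht'0 hu.1
      have h2 : u < T := lt_of_le_of_lt hu.2 htT
      exact ((hsolR u h1 h2).2.1).continuousAt.continuousWithinAt
    · intro u hu
      rw [interior_Icc] at hu
      have h1 : 0 ≤ u := le_trans ht'0 hu.1.le
      have h2 : u < T := lt_trans hu.2 htT
      exact ((hsolR u h1 h2).2.1).differentiableAt.differentiableWithinAt
    · intro u hu
      rw [interior_Icc] at hu
      have h1 : 0 ≤ u := le_trans ht'0 hu.1.le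
      have h2 : u < T := lt_trans hu.2 htT
      rw [((hsolR u h1 h2).2.1).deriv]
      exact hy u hu.1.le h2
  exact hmono ⟨le_refl t', htt'.le⟩ ⟨htt'.le, le_refl t⟩ htt'.le
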